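/- Let p be a prime, e ≥ 1 an integer, and R a commutative ring of characteristic p such that F^e_*R (that is, R viewed as a module over itself via r • x = r^{p^e}·x) is a finitely generated free R-module. Then for all ideals I, J of R one has C^e·I ⊆ J if and only if I ⊆ J^{[p^e]}. (Lemma 2.3(b).) -/
import Mathlib


/-- A `p^{-e}`-linear map on `R`: an additive map `φ : R → R` with
`φ (r^{p^e} * x) = r * φ x`. -/
def IsCartierLinear (p e : ℕ) {R : Type*} [CommRing R] (φ : R →+ R) : Prop :=
  ∀ r x : R, φ (r ^ p ^ e * x) = r * φ x

/-- `C^e · I`: the ideal generated by all `φ x` with `φ` a `p^{-e}`-linear map and `x ∈ I`. -/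
def cartierIdeal (p e : ℕ) {R : Type*} [CommRing R] (I : Ideal R) : Ideal R :=
  Ideal.span {y | ∃ φ : R →+ R, IsCartierLinear p e φ ∧ ∃ x ∈ I, φ x = y}

/-- `J^{[q]}`: the ideal generated by `q`-th powers of elements of `J`. -/
def bracketPower {R : Type*} [CommRing R] (J : Ideal R) (q : ℕ) : Ideal R :=
  Ideal.span ((fun x => x ^ q) '' (J : Set R))

/-- Lemma 2.3(b): if `F^e_* R` is a finitely generated free `R`-module, then
`C^e · I ⊆ J` iff `I ⊆ J^{[p^e]}`. -/
theorem cartierIdeal_le_iff (p : ℕ) (hp : p.Prime)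
    (e : ℕ) (he : 1 ≤ e) (R : Type*) [CommRing R] [CharP R p]
    (hfree : ∃ n : ℕ, ∃ b : Fin n → R, ∀ x : R, ∃! c : Fin n → R,
      x = ∑ i, c i ^ p ^ e * b i)
    (I J : Ideal R) :
    cartierIdeal p e I ≤ J ↔ I ≤ bracketPower J (p ^ e) := by
  haveI : Fact p.Prime := ⟨hp⟩
  obtain ⟨n, b, hb⟩ := hfree
  set q := p ^ e with hq
  have hq0 : q ≠ 0 := pow_ne_zero _ hp.ne_zero
  -- coordinate functions
  let c : R → Fin n → R := fun x => (hb x).choose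
  have hc : ∀ x, x = ∑ i, c x i ^ q * b i := fun x => (hb x).choose_spec.1
  have hcu : ∀ x (d : Fin n → R), x = ∑ i, d i ^ q * b i → d = c x :=
    fun x d hd => (hb x).choose_spec.2 d hd
  have hczero : c 0 = 0 := by
    refine (hcu 0 0 ?_).symm
    simp [zero_pow hq0]
  have hcadd : ∀ x y, c (x + y) = c x + c y := by
    intro x y
    refine (hcu (x + y) (c x + c y) ?_).symm
    conv_lhs => rw [hc x, hc y]
    rw [← Finset.sum_add_distrib]
    refine Finset.sum_congr rfl fun i _ => ?_
    rw [Pi.add_apply, add_pow_char_pow, add_mul]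
  have hcsmul : ∀ (r : R) x, c (r ^ q * x) = fun i => r * c x i := by
    intro r x
    refine (hcu (r ^ q * x) _ ?_).symm
    conv_lhs => rw [hc x]
    rw [Finset.mul_sum]
    refine Finset.sum_congr rfl fun i _ => ?_
    rw [mul_pow, mul_assoc]
  constructor
  · -- forward
    intro h x hx
    have hcJ : ∀ i, c x i ∈ J := by
      intro i
      apply h
      apply Ideal.subset_span
      exact ⟨⟨⟨fun y => c y i, by simp [hczero]⟩, fun a b' => by simp [hcadd]⟩,
        fun r y => by simpa using congrFun (hcsmul r y) i, x, hx, rfl⟩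
    rw [hc x]
    exact Ideal.sum_mem _ fun i _ =>
      Ideal.mul_mem_right _ _ (Ideal.subset_span ⟨_, hcJ i, rfl⟩)
  · -- backward
    intro h
    rw [cartierIdeal, Ideal.span_le]
    rintro y ⟨φ, hφ, x, hxI, rfl⟩
    have hx : x ∈ bracketPower J q := h hxI
    have key : ∀ z ∈ bracketPower J q, ∀ r : R, φ (r * z) ∈ J := by
      intro z hz
      refine Submodule.span_induction ?_ ?_ ?_ ?_ hz
      · rintro _ ⟨j, hj, rfl⟩ r
        rw [mul_comm, hφ j r]
        exact Ideal.mul_mem_right _ _ hj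
      · intro r; simpa using J.zero_mem
      · intro a b' _ _ ha hb' r
        rw [mul_add, map_add]
        exact J.add_mem (ha r) (hb' r)
      · intro s a _ ha r
        rw [smul_eq_mul, ← mul_assoc]
        exact ha (r * s)
    simpa using key x hx 1
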